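/- Let V : ℝⁿ → ℝ be continuously differentiable, bounded below, coercive and strictly convex, and (x_n) generated by the discrete gradient method with step sizes in [c, M]. Then (x_n) converges to the unique global minimizer of V. -/

import Mathlib

open scoped RealInnerProductSpace
open Filter Topology

private lemma aux_min {n : ℕ} {V : EuclideanSpace ℝ (Fin n) → ℝ} (hV : ContDiff ℝ 1 V)
    (hconv : ConvexOn ℝ Set.univ V) {a : EuclideanSpace ℝ (Fin n)}
    (hgrad : gradient V a = 0) (w : EuclideanSpace ℝ (Fin n)) : V a ≤ V w := by
  have hline : HasDerivAt (fun t : ℝ => t • (w - a) + a) (w - a) 0 := by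
    simpa using ((hasDerivAt_id (0 : ℝ)).smul_const (w - a)).add_const a
  have hF : HasFDerivAt V (InnerProductSpace.toDual ℝ _ (gradient V a)) a :=
    ((hV.differentiable one_ne_zero) a).hasGradientAt
  have hF' : HasFDerivAt V (InnerProductSpace.toDual ℝ _ (gradient V a))
      ((fun t : ℝ => t • (w - a) + a) 0) := by simpa using hF
  have hd : HasDerivAt (fun t : ℝ => V (t • (w - a) + a)) 0 0 := by
    have h2 := hF'.comp_hasDerivAt 0 hline
    simpa [hgrad, Function.comp_def] using h2
  have hcg : ConvexOn ℝ Set.univ (fun t : ℝ => V (t • (w - a) + a)) := by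
    have h3 := hconv.comp_affineMap (AffineMap.lineMap a w)
    simpa [Function.comp_def, AffineMap.lineMap_apply, vsub_eq_sub, vadd_eq_add] using h3
  have h4 := hcg.le_slope_of_hasDerivAt (Set.mem_univ (0:ℝ)) (Set.mem_univ 1) one_pos hd
  simp [slope_def_field] at h4
  linarith

theorem stmt_12 (n : ℕ) (V : EuclideanSpace ℝ (Fin n) → ℝ)
    (hV : ContDiff ℝ 1 V) (hbdd : ∃ C : ℝ, ∀ u, C ≤ V u)
    (hcoercive : ∀ u : ℕ → EuclideanSpace ℝ (Fin n),
      Tendsto (fun k => ‖u k‖) atTop atTop → Tendsto (fun k => V (u k)) atTop atTop)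
    (hconv : StrictConvexOn ℝ Set.univ V)
    (DG : EuclideanSpace ℝ (Fin n) × EuclideanSpace ℝ (Fin n) → EuclideanSpace ℝ (Fin n))
    (hDGcont : Continuous DG)
    (hDG1 : ∀ u u', ⟪DG (u, u'), u' - u⟫ = V u' - V u)
    (hDG2 : ∀ u, DG (u, u) = gradient V u)
    (x : ℕ → EuclideanSpace ℝ (Fin n)) (τ : ℕ → ℝ) (c M : ℝ)
    (hc : 0 < c) (hcM : ∀ k, c ≤ τ k ∧ τ k ≤ M)
    (hstep : ∀ k, x (k + 1) = x k - τ k • DG (x k, x (k + 1))) :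
    ∃ xstar, (∀ w, V xstar ≤ V w) ∧ Tendsto x atTop (nhds xstar) := by
  obtain ⟨C, hC⟩ := hbdd
  have hτpos : ∀ k, 0 < τ k := fun k => hc.trans_le (hcM k).1
  have hstep' : ∀ k, x (k + 1) - x k = -(τ k • DG (x k, x (k + 1))) := by
    intro k
    nth_rewrite 1 [hstep k]
    exact sub_sub_cancel_left _ _
  have hE : ∀ k, V (x (k + 1)) - V (x k) = -(τ k * ‖DG (x k, x (k + 1))‖ ^ 2) := by
    intro k
    rw [← hDG1, hstep' k, inner_neg_right, real_inner_smul_right,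
      real_inner_self_eq_norm_sq]
  have hmono : Antitone (fun k => V (x k)) := by
    apply antitone_nat_of_succ_le
    intro k
    have h1 := hE k
    have h2 : 0 ≤ τ k * ‖DG (x k, x (k + 1))‖ ^ 2 :=
      mul_nonneg (hτpos k).le (sq_nonneg _)
    linarith
  have hbdd' : BddBelow (Set.range fun k => V (x k)) := by
    refine ⟨C, ?_⟩; rintro _ ⟨k, rfl⟩; exact hC _
  set L : ℝ := ⨅ k, V (x k) with hL
  have hVlim : Tendsto (fun k => V (x k)) atTop (𝓝 L) := tendsto_atTop_ciInf hmono hbdd'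
  have hdiff0 : Tendsto (fun k => V (x k) - V (x (k + 1))) atTop (𝓝 0) := by
    have := hVlim.sub (hVlim.comp (tendsto_add_atTop_nat 1))
    simpa using this
  have h1 : Tendsto (fun k => τ k * ‖DG (x k, x (k + 1))‖ ^ 2) atTop (𝓝 0) := by
    refine hdiff0.congr fun k => ?_
    have := hE k; linarith
  have hsq : Tendsto (fun k => ‖DG (x k, x (k + 1))‖ ^ 2) atTop (𝓝 0) := by
    have h2 : Tendsto (fun k => c * ‖DG (x k, x (k + 1))‖ ^ 2) atTop (𝓝 0) := by
      refine squeeze_zero (fun k => mul_nonneg hc.le (sq_nonneg _)) (fun k => ?_) h1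
      exact mul_le_mul_of_nonneg_right (hcM k).1 (sq_nonneg _)
    have h3 := h2.const_mul c⁻¹
    simp only [mul_zero] at h3
    refine h3.congr fun k => ?_
    field_simp
  have hDG0 : Tendsto (fun k => ‖DG (x k, x (k + 1))‖) atTop (𝓝 0) := by
    have h4 := (Real.continuous_sqrt.tendsto 0).comp hsq
    simp only [Real.sqrt_zero] at h4
    refine h4.congr fun k => ?_
    simp [Real.sqrt_sq (norm_nonneg _)]
  have hMnn : (0:ℝ) ≤ M := hc.le.trans ((hcM 0).1.trans (hcM 0).2)
  have hxdiff0 : Tendsto (fun k => x (k + 1) - x k) atTop (𝓝 0) := by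
    have hg : Tendsto (fun k => M * ‖DG (x k, x (k + 1))‖) atTop (𝓝 0) := by
      simpa using hDG0.const_mul M
    refine squeeze_zero_norm (fun k => ?_) hg
    rw [hstep' k, norm_neg, norm_smul, Real.norm_eq_abs, abs_of_pos (hτpos k)]
    exact mul_le_mul_of_nonneg_right (hcM k).2 (norm_nonneg _)
  -- boundedness
  have hbound : ∃ R, ∀ k, ‖x k‖ ≤ R := by
    by_contra h
    push_neg at h
    have h' : ∀ j : ℕ, ∃ k, (j : ℝ) < ‖x k‖ := fun j => h j
    choose u hu using h'
    have h1 : Tendsto (fun j => ‖x (u j)‖) atTop atTop :=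
      tendsto_atTop_mono (fun j => (hu j).le) tendsto_natCast_atTop_atTop
    have h2 := hcoercive (fun j => x (u j)) h1
    obtain ⟨j, hj⟩ := (h2.eventually_gt_atTop (V (x 0))).exists
    exact absurd (hmono (Nat.zero_le (u j))) (not_le.mpr hj)
  obtain ⟨R, hR⟩ := hbound
  have hbS : Bornology.IsBounded (Metric.closedBall (0 : EuclideanSpace ℝ (Fin n)) R) :=
    Metric.isBounded_closedBall
  have hxS : ∀ k, x k ∈ Metric.closedBall (0 : EuclideanSpace ℝ (Fin n)) R :=
    fun k => mem_closedBall_zero_iff.mpr (hR k)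
  obtain ⟨a, -, φ, hφ, hlim⟩ := tendsto_subseq_of_bounded hbS hxS
  have hφtop : Tendsto φ atTop atTop := hφ.tendsto_atTop
  have hlim' : Tendsto (fun j => x (φ j + 1)) atTop (𝓝 a) := by
    have h1 : Tendsto (fun j => x (φ j + 1) - x (φ j)) atTop (𝓝 0) := hxdiff0.comp hφtop
    have := hlim.add h1
    simpa using this
  have hDGa : Tendsto (fun j => DG (x (φ j), x (φ j + 1))) atTop (𝓝 (DG (a, a))) :=
    (hDGcont.tendsto (a, a)).comp (hlim.prodMk_nhds hlim')
  have hDGz : Tendsto (fun j => DG (x (φ j), x (φ j + 1))) atTop (𝓝 0) := by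
    rw [tendsto_zero_iff_norm_tendsto_zero]
    exact hDG0.comp hφtop
  have hgrad0 : gradient V a = 0 := by
    rw [← hDG2]
    exact tendsto_nhds_unique hDGa hDGz
  have hmin : ∀ w, V a ≤ V w := aux_min hV hconv.convexOn hgrad0
  have hVc : Continuous V := hV.continuous
  have hLa : L = V a :=
    tendsto_nhds_unique (hVlim.comp hφtop) ((hVc.tendsto a).comp hlim)
  refine ⟨a, hmin, ?_⟩
  by_contra hnot
  rw [Metric.tendsto_atTop] at hnot
  push_neg at hnot
  obtain ⟨ε, hε, hfreq⟩ := hnot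
  choose u hu1 hu2 using hfreq
  obtain ⟨b, -, ψ, hψ, hlimb⟩ := tendsto_subseq_of_bounded hbS (fun j => hxS (u j))
  have hune : ε ≤ dist b a := by
    have hdist : Tendsto (fun j => dist (x (u (ψ j))) a) atTop (𝓝 (dist b a)) :=
      hlimb.dist tendsto_const_nhds
    exact ge_of_tendsto' hdist fun j => hu2 (ψ j)
  have hbne : b ≠ a := by
    intro h
    rw [h, dist_self] at hune
    linarith
  have hutop : Tendsto (fun j => u (ψ j)) atTop atTop :=
    tendsto_atTop_mono (fun j => (hψ.id_le j).trans (hu1 (ψ j))) tendsto_id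
  have hVbL : V b = L :=
    tendsto_nhds_unique ((hVc.tendsto b).comp hlimb) (hVlim.comp hutop)
  have hmid := hconv.2 (Set.mem_univ b) (Set.mem_univ a) hbne
    (by norm_num : (0:ℝ) < 1/2) (by norm_num : (0:ℝ) < 1/2) (by norm_num)
  have hma := hmin ((1/2 : ℝ) • b + (1/2 : ℝ) • a)
  rw [hVbL, hLa] at hmid
  simp only [smul_eq_mul] at hmid
  linarith
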